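/- Let n ≥ 1 and K ≥ 0 be integers. For 0 ≤ j ≤ K let x_j ∈ P_n^K denote the element whose underlying set is {n} and whose K-fold interval decomposition places n in the part with index j. Let P̃_n^K denote the induced subposet P_n^K ∖ {x_0, …, x_K}. Then: (1) the map i : P_{n−1}^K → P̃_n^K induced by the inclusion {0,…,n−1} ⊆ {0,…,n} is a well-defined order-preserving embedding (its image contains no x_j); (2) the map f : P̃_n^K → P_{n−1}^K given by f(S, {S_j}) = (S ∖ {n}, {S_j ∖ {n}}) is well defined (S ∖ {n} is nonempty for every element of P̃_n^K) and order-preserving; (3) f ∘ i = id on P_{n−1}^K, and i(f(y)) ≤ y for every y ∈ P̃_n^K; equivalently, i and f form a Galois connection with i the lower adjoint. -/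

import Mathlib

/-- An element of the poset `P_{?}^k` over a linearly ordered type `α`:
a `k`-fold interval decomposition of a nonempty finite subset of `α`, encoded by its
family of (possibly empty) parts `P 0, …, P k`.  The underlying set is the union of
the parts; it is required to be nonempty, and whenever `i < i'` every element of
`P i` is smaller than every element of `P i'`.  The order is `P ≤ Q` iff
`P j ⊆ Q j` for all `j`.  `IntervalDecomp (Fin (n+1)) k` is the poset `P_n^k`. -/
abbrev IntervalDecomp (α : Type) [LinearOrder α] (k : ℕ) : Type :=
  {P : Fin (k + 1) → Finset α //
    (∃ j : Fin (k + 1), (P j).Nonempty) ∧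
      ∀ i i' : Fin (k + 1), i < i' → ∀ x ∈ P i, ∀ y ∈ P i', x < y}

/-- The element `x_j` of `P_n^K` whose underlying set is `{n}` and whose `K`-fold
interval decomposition places `n` in the part with index `j`. -/
def xel (n K : ℕ) (j : Fin (K + 1)) : IntervalDecomp (Fin (n + 1)) K :=
  ⟨fun i => if i = j then {Fin.last n} else ∅, ⟨j, by simp⟩, by
    intro i i' hii' x hx y hy
    by_cases hi : i = j
    · by_cases hi' : i' = j
      · exact absurd (hi.trans hi'.symm) (ne_of_lt hii')
      · simp [hi'] at hy
    · simp [hi] at hx⟩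

/-- The induced subposet `P̃_n^K = P_n^K ∖ {x_0, …, x_K}`. -/
abbrev PtildeNK (n K : ℕ) : Type :=
  {y : IntervalDecomp (Fin (n + 1)) K // ∀ j : Fin (K + 1), y ≠ xel n K j}

namespace RGC

variable {n K : ℕ}

lemma castSuccEmb_apply (a : Fin n) : Fin.castSuccEmb a = a.castSucc := rfl

lemma castSucc_injOn (s : Set (Fin (n+1))) : Set.InjOn (Fin.castSucc : Fin n → Fin (n+1)) (Fin.castSucc ⁻¹' s) :=
  fun a _ b _ h => Fin.castSucc_injective n h

lemma map_preimage (s : Finset (Fin (n+1))) (hs : Fin.last n ∉ s) :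
    (s.preimage Fin.castSucc (castSucc_injOn _)).map Fin.castSuccEmb = s := by
  ext x
  simp only [Finset.mem_map, Finset.mem_preimage, castSuccEmb_apply]
  constructor
  · rintro ⟨a, ha, rfl⟩; exact ha
  · intro hx
    obtain ⟨y, rfl⟩ := Fin.eq_castSucc_of_ne_last (fun h => hs (h ▸ hx))
    exact ⟨y, hx, rfl⟩

def imap (P : IntervalDecomp (Fin n) K) : IntervalDecomp (Fin (n+1)) K :=
  ⟨fun j => (P.val j).map Fin.castSuccEmb,
   P.prop.1.elim fun j hj => ⟨j, hj.map⟩, by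
     intro i i' h x hx y hy
     simp only [Finset.mem_map, castSuccEmb_apply] at hx hy
     obtain ⟨a, ha, rfl⟩ := hx
     obtain ⟨b, hb, rfl⟩ := hy
     exact Fin.castSucc_lt_castSucc_iff.mpr (P.prop.2 i i' h a ha b hb)⟩

lemma imap_ne_xel (P : IntervalDecomp (Fin n) K) (j : Fin (K+1)) : imap P ≠ xel n K j := by
  intro h
  have h2 : (imap P).val j = (xel n K j).val j := by rw [h]
  simp only [imap, xel, if_pos rfl] at h2
  have : Fin.last n ∈ (P.val j).map Fin.castSuccEmb := h2 ▸ Finset.mem_singleton_self _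
  simp only [Finset.mem_map, castSuccEmb_apply] at this
  obtain ⟨a, _, ha⟩ := this
  exact absurd ha (Fin.ne_of_lt (Fin.castSucc_lt_last a))

def itil (P : IntervalDecomp (Fin n) K) : PtildeNK n K := ⟨imap P, imap_ne_xel P⟩

noncomputable def fmap (Q : PtildeNK n K) : IntervalDecomp (Fin n) K :=
  ⟨fun j => ((Q.val.val j).erase (Fin.last n)).preimage Fin.castSucc (castSucc_injOn _), by
    constructor
    · by_contra hc
      push_neg at hc
      have hsub : ∀ j, Q.val.val j ⊆ {Fin.last n} := by
        intro j x hx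
        rcases Fin.eq_castSucc_or_eq_last x with ⟨y, rfl⟩ | rfl
        · exact absurd (Finset.mem_preimage.mpr (Finset.mem_erase.mpr
            ⟨Fin.ne_of_lt (Fin.castSucc_lt_last y), hx⟩)) (by rw [hc j]; exact Finset.notMem_empty y)
        · exact Finset.mem_singleton_self _
      obtain ⟨j0, hj0⟩ := Q.val.prop.1
      have hj0' : Q.val.val j0 = {Fin.last n} :=
        Finset.Subset.antisymm (hsub j0) (Finset.singleton_subset_iff.mpr
          (by obtain ⟨x, hx⟩ := hj0; have := hsub j0 hx; simp at this; rwa [this] at hx))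
      apply Q.prop j0
      apply Subtype.ext
      funext i
      by_cases hi : i = j0
      · simp [xel, hi, hj0']
      · simp only [xel, if_neg hi]
        by_contra hne
        obtain ⟨x, hx⟩ := Finset.nonempty_iff_ne_empty.mpr hne
        have hx' : x = Fin.last n := by have := hsub i hx; simpa using this
        have hl : Fin.last n ∈ Q.val.val j0 := hj0' ▸ Finset.mem_singleton_self _
        rcases lt_or_gt_of_ne (hi : i ≠ j0) with h | h
        · exact absurd (Q.val.prop.2 i j0 h x hx _ hl) (by rw [hx']; exact lt_irrefl _)
        · exact absurd (Q.val.prop.2 j0 i h _ hl x hx) (by rw [hx']; exact lt_irrefl _)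
    · intro i i' h x hx y hy
      simp only [Finset.mem_preimage, Finset.mem_erase] at hx hy
      exact Fin.castSucc_lt_castSucc_iff.mp (Q.val.prop.2 i i' h _ hx.2 _ hy.2)⟩

lemma fmap_map (Q : PtildeNK n K) (j : Fin (K+1)) :
    ((fmap Q).val j).map Fin.castSuccEmb = (Q.val.val j).erase (Fin.last n) :=
  map_preimage _ (fun h => (Finset.mem_erase.mp h).1 rfl)

end RGC

/-- Let `n ≥ 1` and `K ≥ 0`.  (1) The map `i : P_{n-1}^K → P̃_n^K` induced by the
inclusion `{0,…,n-1} ⊆ {0,…,n}` is a well-defined order-preserving embedding (its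
image contains no `x_j`); (2) the map `f : P̃_n^K → P_{n-1}^K`,
`f(S, {S_j}) = (S ∖ {n}, {S_j ∖ {n}})`, is well defined and order-preserving;
(3) `f ∘ i = id` and `i(f(y)) ≤ y` for every `y ∈ P̃_n^K`; equivalently, `i` and `f`
form a Galois connection with `i` the lower adjoint. -/
theorem retraction_galois_connection (n K : ℕ) (hn : 1 ≤ n) :
    ∃ (i : IntervalDecomp (Fin n) K → PtildeNK n K)
      (f : PtildeNK n K → IntervalDecomp (Fin n) K),
      (∀ (P : IntervalDecomp (Fin n) K) (j : Fin (K + 1)),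
          ((i P).val).val j = (P.val j).map Fin.castSuccEmb) ∧
      (∀ (Q : PtildeNK n K) (j : Fin (K + 1)),
          ((f Q).val j).map Fin.castSuccEmb = ((Q.val).val j).erase (Fin.last n)) ∧
      (∀ P P' : IntervalDecomp (Fin n) K, i P ≤ i P' ↔ P ≤ P') ∧
      Monotone f ∧
      (∀ P : IntervalDecomp (Fin n) K, f (i P) = P) ∧
      (∀ y : PtildeNK n K, i (f y) ≤ y) ∧
      GaloisConnection i f := by
  refine ⟨RGC.itil, RGC.fmap, fun P j => rfl, RGC.fmap_map, ?_, ?_, ?_, ?_, ?_⟩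
  · intro P P'
    constructor
    · intro h j
      exact Finset.map_subset_map.mp (h j)
    · intro h j
      exact Finset.map_subset_map.mpr (h j)
  · intro Q Q' h j
    intro x hx
    simp only [RGC.fmap, Finset.mem_preimage, Finset.mem_erase] at hx ⊢
    exact ⟨hx.1, h j hx.2⟩
  · intro P
    apply Subtype.ext
    funext j
    apply Finset.map_injective Fin.castSuccEmb
    rw [RGC.fmap_map]
    show ((RGC.imap P).val j).erase (Fin.last n) = _
    apply Finset.erase_eq_of_notMem
    simp only [RGC.imap, Finset.mem_map, RGC.castSuccEmb_apply]
    rintro ⟨a, _, ha⟩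
    exact absurd ha (Fin.ne_of_lt (Fin.castSucc_lt_last a))
  · intro y j
    show ((RGC.itil (RGC.fmap y)).val).val j ⊆ y.val.val j
    show ((RGC.fmap y).val j).map Fin.castSuccEmb ⊆ _
    rw [RGC.fmap_map]
    exact Finset.erase_subset _ _
  · intro P y
    constructor
    · intro h
      calc P = RGC.fmap (RGC.itil P) := by
              apply Subtype.ext; funext j
              apply Finset.map_injective Fin.castSuccEmb
              rw [RGC.fmap_map]
              symm
              apply Finset.erase_eq_of_notMem
              simp only [RGC.itil, RGC.imap, Finset.mem_map, RGC.castSuccEmb_apply]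
              rintro ⟨a, _, ha⟩
              exact absurd ha (Fin.ne_of_lt (Fin.castSucc_lt_last a))
        _ ≤ RGC.fmap y := by
              intro j x hx
              simp only [RGC.fmap, Finset.mem_preimage, Finset.mem_erase] at hx ⊢
              exact ⟨hx.1, h j hx.2⟩
    · intro h j
      calc ((RGC.itil P).val).val j ⊆ ((RGC.itil (RGC.fmap y)).val).val j :=
              Finset.map_subset_map.mpr (h j)
        _ ⊆ y.val.val j := by
              show ((RGC.fmap y).val j).map Fin.castSuccEmb ⊆ _
              rw [RGC.fmap_map]; exact Finset.erase_subset _ _
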